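/- arXiv:1204.5306 — 7 statements merged into one kernel-verified Lean document; each statement's English description precedes it below -/
import Mathlib

section
/- Let q be a subcube of {0,1}^n of dimension d and let c ⊊ q be a subcube of dimension r < d contained in q. Then the set difference q \ c can be partitioned into exactly d - r pairwise disjoint subcubes, one of each dimension r, r+1, ..., d-1. -/
/-- The subcube of `{0,1}^n` obtained by fixing the coordinates in `S` to the values given by `a`. -/
def cube {n : ℕ} (S : Finset (Fin n)) (a : Fin n → Bool) : Set (Fin n → Bool) :=
  {x | ∀ i ∈ S, x i = a i}

/-- A set is a subcube if it arises from some partial assignment. -/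
def IsSubcube {n : ℕ} (A : Set (Fin n → Bool)) : Prop :=
  ∃ (S : Finset (Fin n)) (a : Fin n → Bool), A = cube S a

/-- A set is a subcube of dimension `d` if it arises from a partial assignment fixing `n - d` coordinates. -/
def IsSubcubeDim {n : ℕ} (A : Set (Fin n → Bool)) (d : ℕ) : Prop :=
  ∃ (S : Finset (Fin n)) (a : Fin n → Bool), A = cube S a ∧ S.card = n - d ∧ d ≤ n

/-- q \ c can be partitioned into exactly d - r disjoint subcubes of dimensions r, r+1, ..., d-1. -/
theorem stmt2 (n d r : ℕ) (q c : Set (Fin n → Bool))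
    (hq : IsSubcubeDim q d) (hc : IsSubcubeDim c r) (hsub : c ⊂ q) (hrd : r < d) :
    ∃ F : Fin (d - r) → Set (Fin n → Bool),
      (∀ i, IsSubcubeDim (F i) (r + i.1)) ∧
      (∀ i j, i ≠ j → Disjoint (F i) (F j)) ∧
      (⋃ i, F i) = q \ c := by
  obtain ⟨S, a, rfl, hScard, hdn⟩ := hq
  obtain ⟨T, b, rfl, hTcard, hrn⟩ := hc
  have hcq : cube T b ⊆ cube S a := hsub.subset
  have hbT : b ∈ cube T b := fun i _ => rfl
  have hST : S ⊆ T := by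
    intro i hiS
    by_contra hiT
    have hy : Function.update b i (!(a i)) ∈ cube T b := by
      intro j hj
      have hji : j ≠ i := fun h => hiT (h ▸ hj)
      simp [Function.update_of_ne hji]
    have := hcq hy i hiS
    simp at this
  have hab : ∀ i ∈ S, b i = a i := fun i hi => hcq hbT i hi
  have hcard : (T \ S).card = d - r := by
    rw [Finset.card_sdiff_of_subset hST, hScard, hTcard]; omega
  set m := d - r with hm
  let e : Fin m → Fin n := fun j => ((T \ S).orderIsoOfFin hcard j : Fin n)
  have he_mem : ∀ j, e j ∈ T \ S := fun j => ((T \ S).orderIsoOfFin hcard j).2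
  have he_inj : Function.Injective e := fun j k h =>
    ((T \ S).orderIsoOfFin hcard).injective (Subtype.ext h)
  have he_surj : ∀ i ∈ T \ S, ∃ j, e j = i := by
    intro i hi
    obtain ⟨j, hj⟩ := ((T \ S).orderIsoOfFin hcard).surjective ⟨i, hi⟩
    exact ⟨j, congrArg Subtype.val hj⟩
  have he_nS : ∀ j, e j ∉ S := fun j => (Finset.mem_sdiff.mp (he_mem j)).2
  have he_T : ∀ j, e j ∈ T := fun j => (Finset.mem_sdiff.mp (he_mem j)).1
  let U : Fin m → Finset (Fin n) := fun k => S ∪ (Finset.Ici k).image e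
  let v : Fin m → (Fin n → Bool) := fun k => Function.update b (e k) (!(b (e k)))
  have hvS : ∀ k, ∀ i ∈ S, v k i = b i := by
    intro k i hi
    have : i ≠ e k := fun h => he_nS k (h ▸ hi)
    simp [v, Function.update_of_ne this]
  refine ⟨fun k => cube (U k) (v k), ?_, ?_, ?_⟩
  · intro k
    refine ⟨U k, v k, rfl, ?_, by omega⟩
    have hdis : Disjoint S ((Finset.Ici k).image e) := by
      rw [Finset.disjoint_right]
      intro i hi
      obtain ⟨j, _, rfl⟩ := Finset.mem_image.mp hi
      exact he_nS j
    rw [Finset.card_union_of_disjoint hdis, Finset.card_image_of_injective _ he_inj,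
      hScard, Fin.card_Ici]
    have hk := k.2
    omega
  · intro k l hkl
    rw [Set.disjoint_left]
    intro x hxk hxl
    rcases lt_or_gt_of_ne hkl with h | h
    · -- k < l : x (e l) = b (e l) from F k, but = !b (e l) from F l
      have h1 : x (e l) = v k (e l) :=
        hxk (e l) (Finset.mem_union_right _ (Finset.mem_image_of_mem e (Finset.mem_Ici.mpr h.le)))
      have h2 : x (e l) = v l (e l) :=
        hxl (e l) (Finset.mem_union_right _ (Finset.mem_image_of_mem e (Finset.mem_Ici.mpr le_rfl)))
      have hne : e l ≠ e k := fun hh => hkl.symm (he_inj hh)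
      rw [show v k (e l) = b (e l) from Function.update_of_ne hne _ _] at h1
      simp [v] at h2
      rw [h1] at h2
      simp at h2
    · have h1 : x (e k) = v l (e k) :=
        hxl (e k) (Finset.mem_union_right _ (Finset.mem_image_of_mem e (Finset.mem_Ici.mpr h.le)))
      have h2 : x (e k) = v k (e k) :=
        hxk (e k) (Finset.mem_union_right _ (Finset.mem_image_of_mem e (Finset.mem_Ici.mpr le_rfl)))
      have hne : e k ≠ e l := fun hh => hkl (he_inj hh)
      rw [show v l (e k) = b (e k) from Function.update_of_ne hne _ _] at h1
      simp [v] at h2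
      rw [h1] at h2
      simp at h2
  · ext x
    simp only [Set.mem_iUnion, Set.mem_diff]
    constructor
    · rintro ⟨k, hxk⟩
      constructor
      · intro i hi
        have := hxk i (Finset.mem_union_left _ hi)
        rw [hvS k i hi, hab i hi] at this
        exact this
      · intro hxc
        have h1 : x (e k) = v k (e k) :=
          hxk (e k) (Finset.mem_union_right _ (Finset.mem_image_of_mem e (Finset.mem_Ici.mpr le_rfl)))
        have h2 : x (e k) = b (e k) := hxc (e k) (he_T k)
        simp [v] at h1
        rw [h2] at h1
        simp at h1
    · rintro ⟨hxq, hxc⟩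
      have : ∃ i ∈ T, x i ≠ b i := by
        by_contra hcon
        push_neg at hcon
        exact hxc hcon
      obtain ⟨i, hiT, hib⟩ := this
      have hiS : i ∉ S := fun hiS => hib (by rw [hxq i hiS, hab i hiS])
      obtain ⟨j, rfl⟩ := he_surj i (Finset.mem_sdiff.mpr ⟨hiT, hiS⟩)
      set K := Finset.univ.filter (fun j : Fin m => x (e j) ≠ b (e j)) with hK
      have hKne : K.Nonempty := ⟨j, by simp [hK, hib]⟩
      refine ⟨K.max' hKne, ?_⟩
      intro i hi
      rcases Finset.mem_union.mp hi with hiS' | hiI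
      · rw [hvS _ i hiS', hab i hiS']
        exact hxq i hiS'
      · obtain ⟨l, hl, rfl⟩ := Finset.mem_image.mp hiI
        rcases eq_or_lt_of_le (Finset.mem_Ici.mp hl) with heq | hlt
        · -- l = max
          subst heq
          have hmK : K.max' hKne ∈ K := K.max'_mem hKne
          have hx : x (e (K.max' hKne)) ≠ b (e (K.max' hKne)) := by simpa [hK] using hmK
          simp only [v, Function.update_self]
          exact Bool.eq_not_iff.mpr hx
        · -- l > max, so l ∉ K
          have hlK : l ∉ K := fun hmem => absurd (Finset.le_max' K l hmem) (not_le.mpr hlt)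
          have hxl : x (e l) = b (e l) := by
            by_contra hc'
            exact hlK (by simp [hK, hc'])
          have hne : e l ≠ e (K.max' hKne) := fun hh => (ne_of_lt hlt) (he_inj hh).symm
          simp only [v, Function.update_of_ne hne]
          exact hxl
end

section
/- Let q be a subcube of {0,1}^n of dimension d and let c ⊊ q be a proper subcube of dimension r contained in q. Then q \ c cannot be written as a union of fewer than d - r pairwise disjoint subcubes. -/
lemma ncard_cube {n : ℕ} (S : Finset (Fin n)) (a : Fin n → Bool) :
    (cube S a).ncard = 2 ^ (n - S.card) := by
  have e : cube S a ≃ ({i : Fin n // i ∉ S} → Bool) :=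
    { toFun := fun x i => x.1 i.1
      invFun := fun g => ⟨fun i => if h : i ∈ S then a i else g ⟨i, h⟩,
        fun i hi => by simp [hi]⟩
      left_inv := by
        rintro ⟨x, hx⟩
        ext i
        by_cases h : i ∈ S <;> simp [h, hx i]
      right_inv := by
        intro g
        ext i
        simp [i.2] }
  have h1 := Nat.card_congr e
  rw [← Nat.card_coe_set_eq, h1, Nat.card_eq_fintype_card, Fintype.card_fun]
  rw [Fintype.card_bool, Fintype.card_subtype_compl]
  simp

lemma pow_sum_lemma : ∀ (M : ℕ) (s : Multiset ℕ) (r t : ℕ),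
    2 * (s.map (2 ^ ·)).sum + Multiset.card s ≤ M →
    (s.map (2 ^ ·)).sum = 2 ^ r * (2 ^ t - 1) → t ≤ Multiset.card s := by
  intro M
  induction M using Nat.strong_induction_on with
  | _ M ih =>
    intro s r t hM hsum
    rcases Nat.eq_zero_or_pos t with ht | ht
    · omega
    -- t ≥ 1, so sum > 0
    have hpos : 0 < (s.map (2 ^ ·)).sum := by
      rw [hsum]
      have : 1 ≤ 2 ^ t - 1 := by
        have : 2 ≤ 2 ^ t := by
          calc 2 = 2^1 := rfl
          _ ≤ 2^t := Nat.pow_le_pow_right (by norm_num) ht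
        omega
      exact Nat.mul_pos (Nat.pow_pos (by norm_num) : 0 < 2 ^ r) (by omega)
    by_cases h0 : (0 : ℕ) ∈ s
    · -- parity of sum determines
      by_cases hpar : (s.map (2 ^ ·)).sum % 2 = 1
      · -- odd: r = 0, remove a zero
        have hr : r = 0 := by
          by_contra hr
          have : 2 ∣ 2 ^ r * (2 ^ t - 1) := Dvd.dvd.mul_right (dvd_pow_self 2 hr) _
          omega
        subst hr
        obtain ⟨s', rfl⟩ : ∃ s', s = 0 ::ₘ s' := ⟨s.erase 0, (Multiset.cons_erase h0).symm⟩
        have hsum' : (s'.map (2 ^ ·)).sum = 2 ^ 1 * (2 ^ (t - 1) - 1) := by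
          simp [Multiset.map_cons, Multiset.sum_cons] at hsum ⊢
          have h2t : 2 ≤ 2 ^ t := by
            calc 2 = 2^1 := rfl
            _ ≤ 2^t := Nat.pow_le_pow_right (by norm_num) ht
          have : 2 ^ t = 2 * 2 ^ (t-1) := by
            rw [← pow_succ']
            congr 1; omega
          omega
        have := ih (2 * (s'.map (2 ^ ·)).sum + Multiset.card s')
          (by simp [Multiset.map_cons, Multiset.sum_cons, Multiset.card_cons] at hM ⊢; omega)
          s' 1 (t-1) le_rfl hsum'
        simp [Multiset.card_cons]
        omega
      · -- even: two zeros, merge into a 1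
        have hcount : (s.map (2 ^ ·)).sum % 2 = Multiset.count 0 s % 2 := by
          clear hM hsum hpos hpar ih h0
          induction s using Multiset.induction with
          | empty => simp
          | cons a s ihs =>
            simp [Multiset.map_cons, Multiset.sum_cons, Multiset.count_cons]
            rcases Nat.eq_zero_or_pos a with ha | ha
            · subst ha; simp; omega
            · have : 2 ^ a % 2 = 0 := by
                have : (2:ℕ) ∣ 2 ^ a := dvd_pow_self 2 (by omega)
                omega
              have hne : ¬ (0 = a) := by omega
              simp [hne]
              omega
        have h2 : 2 ≤ Multiset.count 0 s := by
          have h1 : 1 ≤ Multiset.count 0 s := Multiset.one_le_count_iff_mem.mpr h0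
          omega
        obtain ⟨s', rfl⟩ : ∃ s', s = 0 ::ₘ 0 ::ₘ s' := by
          refine ⟨(s.erase 0).erase 0, ?_⟩
          rw [Multiset.cons_erase, Multiset.cons_erase h0]
          rw [← Multiset.count_pos, Multiset.count_erase_self]
          omega
        have hsum' : ((1 ::ₘ s').map (2 ^ ·)).sum = 2 ^ r * (2 ^ t - 1) := by
          simp [Multiset.map_cons, Multiset.sum_cons] at hsum ⊢
          omega
        have := ih (2 * ((1 ::ₘ s').map (2 ^ ·)).sum + Multiset.card (1 ::ₘ s'))
          (by simp [Multiset.map_cons, Multiset.sum_cons, Multiset.card_cons] at hM ⊢; omega)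
          (1 ::ₘ s') r t le_rfl hsum'
        simp [Multiset.card_cons] at this ⊢
        omega
    · -- no zeros: divide by two
      have hall : ∀ k ∈ s, 1 ≤ k := by
        intro k hk
        rcases Nat.eq_zero_or_pos k with h | h
        · exact absurd (h ▸ hk) h0
        · exact h
      have hdiv : (s.map (2 ^ ·)).sum = 2 * ((s.map (fun k => 2 ^ (k-1))).sum) := by
        rw [← Multiset.sum_map_mul_left]
        apply congrArg
        apply Multiset.map_congr rfl
        intro k hk
        have := hall k hk
        rw [← pow_succ']
        congr 1; omega
      have hr : 1 ≤ r := by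
        by_contra hr
        have hr0 : r = 0 := by omega
        subst hr0
        have h2t : 2 ≤ 2 ^ t := by
          calc 2 = 2^1 := rfl
          _ ≤ 2^t := Nat.pow_le_pow_right (by norm_num) ht
        simp at hsum
        have h2t' : 2 ^ t = 2 * 2 ^ (t-1) := by
          rw [← pow_succ']; congr 1; omega
        omega
      have hsum' : ((s.map (fun k => k - 1)).map (2 ^ ·)).sum = 2 ^ (r-1) * (2 ^ t - 1) := by
        rw [Multiset.map_map]
        have h2r : 2 ^ r = 2 * 2 ^ (r-1) := by
          rw [← pow_succ']; congr 1; omega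
        have hsum2 : (s.map (2 ^ ·)).sum = 2 * (2 ^ (r-1) * (2 ^ t - 1)) := by
          rw [hsum, h2r]; ring
        have : (s.map (fun k => 2 ^ (k-1))).sum = 2 ^ (r-1) * (2^t - 1) := by
          omega
        simpa using this
      have := ih (2 * ((s.map (fun k => k - 1)).map (2 ^ ·)).sum + Multiset.card (s.map (fun k => k - 1)))
        (by
          simp only [Multiset.card_map]
          rw [Multiset.map_map]
          have : (s.map (fun k => 2 ^ (k-1))).sum < (s.map (2 ^ ·)).sum := by omega
          simp only [Function.comp] at *
          omega)
        (s.map (fun k => k - 1)) (r-1) t le_rfl hsum'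
      simpa using this

lemma ncard_iUnion_fin {α : Type*} [Finite α] : ∀ (m : ℕ) (F : Fin m → Set α),
    (∀ i j, i ≠ j → Disjoint (F i) (F j)) → (⋃ i, F i).ncard = ∑ i, (F i).ncard := by
  intro m
  induction m with
  | zero => intro F _; simp
  | succ m ih =>
    intro F hdisj
    have hsp : (⋃ i, F i) = F 0 ∪ ⋃ i : Fin m, F i.succ := by
      ext x
      simp [Fin.exists_fin_succ]
    rw [hsp, Set.ncard_union_eq, ih (fun i => F i.succ)
      (fun i j hij => hdisj _ _ (by simpa using hij)), Fin.sum_univ_succ]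
    · exact Set.disjoint_iUnion_right.mpr fun i => hdisj _ _ (Fin.succ_ne_zero i).symm

/-- q \ c cannot be written as a union of fewer than d - r pairwise disjoint subcubes. -/
theorem stmt3 (n d r : ℕ) (q c : Set (Fin n → Bool))
    (hq : IsSubcubeDim q d) (hc : IsSubcubeDim c r) (hsub : c ⊂ q) :
    ∀ (m : ℕ) (F : Fin m → Set (Fin n → Bool)),
      (∀ i, IsSubcube (F i)) → (∀ i j, i ≠ j → Disjoint (F i) (F j)) →
      (⋃ i, F i) = q \ c → d - r ≤ m := by
  obtain ⟨Sq, aq, hq1, hq2, hq3⟩ := hq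
  obtain ⟨Sc, ac, hc1, hc2, hc3⟩ := hc
  intro m F hFsub hFdisj hFunion
  have hcardq : q.ncard = 2 ^ d := by
    rw [hq1, ncard_cube, hq2]; congr 1; omega
  have hcardc : c.ncard = 2 ^ r := by
    rw [hc1, ncard_cube, hc2]; congr 1; omega
  have hrd : r < d := by
    have h1 : c.ncard < q.ncard := Set.ncard_lt_ncard hsub (Set.toFinite q)
    rw [hcardq, hcardc] at h1
    exact (Nat.pow_lt_pow_iff_right (by norm_num)).mp h1
  have hdiff : (q \ c).ncard = 2 ^ d - 2 ^ r := by
    rw [Set.ncard_diff hsub.subset, hcardq, hcardc]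
  choose S a hF using hFsub
  have hcardF : ∀ i, (F i).ncard = 2 ^ (n - (S i).card) := by
    intro i; rw [hF i, ncard_cube]
  have hsum : ∑ i, 2 ^ (n - (S i).card) = 2 ^ r * (2 ^ (d - r) - 1) := by
    have h1 : (⋃ i, F i).ncard = ∑ i, (F i).ncard := ncard_iUnion_fin m F hFdisj
    rw [hFunion, hdiff] at h1
    have h2 : 2 ^ d - 2 ^ r = 2 ^ r * (2 ^ (d - r) - 1) := by
      rw [Nat.mul_sub, mul_one, ← pow_add]
      congr 2; omega
    rw [← h2, h1]
    exact Finset.sum_congr rfl fun i _ => (hcardF i).symm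
  -- convert to multiset and apply the key lemma
  set ms : Multiset ℕ := Multiset.map (fun i => n - (S i).card) Finset.univ.val with hms
  have hmsum : (ms.map (2 ^ ·)).sum = 2 ^ r * (2 ^ (d - r) - 1) := by
    rw [hms, Multiset.map_map, ← hsum]
    rfl
  have hmcard : Multiset.card ms = m := by simp [hms]
  have := pow_sum_lemma (2 * (ms.map (2 ^ ·)).sum + Multiset.card ms) ms r (d - r)
    le_rfl hmsum
  omega
end

section
/- For every k ≥ 1, the Boolean function f on n = 2k variables defined by f(x) = 1 iff x_{2i-1} = x_{2i} = 1 for some i ∈ {1,...,k}, has a SOP cover with k cubes (the products x_{2i-1} x_{2i}), but every DSOP of f contains at least 2^k - 1 cubes. -/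
/-! ### Auxiliary rank lemmas -/

lemma myRank_add_le {α : Type*} [Fintype α] (A B : Matrix α α ℝ) :
    (A + B).rank ≤ A.rank + B.rank := by
  classical
  rw [Matrix.rank, Matrix.rank, Matrix.rank, Matrix.mulVecLin_add]
  have h : LinearMap.range (A.mulVecLin + B.mulVecLin) ≤
      LinearMap.range A.mulVecLin ⊔ LinearMap.range B.mulVecLin := by
    rintro x ⟨v, rfl⟩
    exact Submodule.mem_sup.2 ⟨A.mulVecLin v, ⟨v, rfl⟩, B.mulVecLin v, ⟨v, rfl⟩, rfl⟩
  exact le_trans (Submodule.finrank_mono h)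
    (Submodule.finrank_add_le_finrank_add_finrank _ _)

lemma myRank_sum_le {α ι : Type*} [Fintype α] (s : Finset ι) (M : ι → Matrix α α ℝ) :
    (∑ i ∈ s, M i).rank ≤ ∑ i ∈ s, (M i).rank := by
  classical
  induction s using Finset.cons_induction with
  | empty => simp
  | cons a s ha ih =>
      rw [Finset.sum_cons, Finset.sum_cons]
      exact (myRank_add_le _ _).trans (add_le_add le_rfl ih)

lemma myRank_outer {α : Type*} [Fintype α] (u v : α → ℝ) :
    (Matrix.replicateCol Unit u * Matrix.replicateRow Unit v).rank ≤ 1 := by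
  refine (Matrix.rank_mul_le_left _ _).trans ?_
  simpa using (Matrix.rank_le_card_width (Matrix.replicateCol Unit u))

lemma outer_apply {α : Type*} [Fintype α] (u v : α → ℝ) (y z : α) :
    (Matrix.replicateCol Unit u * Matrix.replicateRow Unit v) y z = u y * v z := by
  simp [Matrix.mul_apply]

/-! ### Pairing of coordinates -/

def evF (k : ℕ) (i : Fin k) : Fin (2 * k) := ⟨2 * i.1, by have := i.2; linarith⟩
def odF (k : ℕ) (i : Fin k) : Fin (2 * k) := ⟨2 * i.1 + 1, by have h := Nat.succ_le_of_lt i.2; linarith⟩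
def ptF (k : ℕ) (y z : Fin k → Bool) : Fin (2 * k) → Bool := fun j =>
  if j.1 % 2 = 0 then y ⟨j.1 / 2, by have := j.2; omega⟩
  else z ⟨j.1 / 2, by have := j.2; omega⟩

lemma ptF_ev (k : ℕ) (y z : Fin k → Bool) (i : Fin k) : ptF k y z (evF k i) = y i := by
  have h0 : (2 * i.1) % 2 = 0 := by omega
  have h1 : (⟨(2 * i.1) / 2, by have := i.2; omega⟩ : Fin k) = i := by
    apply Fin.ext; show (2 * i.1) / 2 = i.1; omega
  simp only [ptF, evF, h0, if_pos, h1]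

lemma ptF_od (k : ℕ) (y z : Fin k → Bool) (i : Fin k) : ptF k y z (odF k i) = z i := by
  have h0 : ¬ ((2 * i.1 + 1) % 2 = 0) := by omega
  have h1 : (⟨(2 * i.1 + 1) / 2, by have := i.2; omega⟩ : Fin k) = i := by
    apply Fin.ext; show (2 * i.1 + 1) / 2 = i.1; omega
  simp only [ptF, odF, h0, if_neg, not_false_iff, h1]

lemma mem_cube_ptF (k : ℕ) (S : Finset (Fin (2 * k))) (a : Fin (2 * k) → Bool)
    (y z : Fin k → Bool) :
    ptF k y z ∈ cube S a ↔
      ((∀ t, evF k t ∈ S → y t = a (evF k t)) ∧ (∀ t, odF k t ∈ S → z t = a (odF k t))) := by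
  constructor
  · intro h
    exact ⟨fun t ht => by rw [← ptF_ev k y z t]; exact h _ ht,
           fun t ht => by rw [← ptF_od k y z t]; exact h _ ht⟩
  · rintro ⟨h1, h2⟩ j hj
    by_cases hp : j.1 % 2 = 0
    · have hj2 : j = evF k ⟨j.1 / 2, by have := j.2; omega⟩ := by
        apply Fin.ext; show j.1 = 2 * (j.1 / 2); omega
      rw [hj2] at hj ⊢
      rw [ptF_ev]; exact h1 _ hj
    · have hj2 : j = odF k ⟨j.1 / 2, by have := j.2; omega⟩ := by
        apply Fin.ext; show j.1 = 2 * (j.1 / 2) + 1; omega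
      rw [hj2] at hj ⊢
      rw [ptF_od]; exact h2 _ hj

/-! ### The disjointness matrix and its inverse -/

noncomputable def DmF (k : ℕ) : Matrix (Fin k → Bool) (Fin k → Bool) ℝ :=
  Matrix.of fun y z => ∏ t : Fin k, (if y t && z t then (0:ℝ) else 1)

noncomputable def EF (k : ℕ) : Matrix (Fin k → Bool) (Fin k → Bool) ℝ :=
  Matrix.of fun y z => ∏ t : Fin k,
    (if y t then (if z t then (-1:ℝ) else 1) else (if z t then (1:ℝ) else 0))

lemma DmF_mul_EF (k : ℕ) : DmF k * EF k = 1 := by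
  classical
  ext y z
  rw [Matrix.mul_apply]
  set f : Fin k → Bool → ℝ := fun t b =>
    (if y t && b then (0:ℝ) else 1) *
      (if b then (if z t then (-1:ℝ) else 1) else (if z t then (1:ℝ) else 0)) with hf
  have key : ∀ w : Fin k → Bool, DmF k y w * EF k w z = ∏ t : Fin k, f t (w t) := by
    intro w
    simp only [DmF, EF, Matrix.of_apply, hf]
    rw [Finset.prod_mul_distrib]
  calc ∑ w : Fin k → Bool, DmF k y w * EF k w z
      = ∑ w : Fin k → Bool, ∏ t, f t (w t) := Finset.sum_congr rfl (fun w _ => key w)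
    _ = ∏ t, ∑ b : Bool, f t b := (Fintype.prod_sum f).symm
    _ = ∏ t, (if y t = z t then (1:ℝ) else 0) := by
          refine Finset.prod_congr rfl (fun t _ => ?_)
          rw [Fintype.sum_bool]
          cases hy : y t <;> cases hz : z t <;> simp [hf, hy, hz]
    _ = (1 : Matrix (Fin k → Bool) (Fin k → Bool) ℝ) y z := by
          rw [Matrix.one_apply]
          by_cases h : y = z
          · subst h; simp
          · rw [if_neg h]
            obtain ⟨t, ht⟩ := Function.ne_iff.1 h
            exact Finset.prod_eq_zero (Finset.mem_univ t) (by simp [ht])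

/-! ### Rank-one matrices attached to cubes -/

open scoped Classical in
noncomputable def MiF (k m : ℕ) (S : Fin m → Finset (Fin (2 * k)))
    (a : Fin m → (Fin (2 * k) → Bool)) (i : Fin m) :
    Matrix (Fin k → Bool) (Fin k → Bool) ℝ :=
  Matrix.replicateCol Unit (fun y => if (∀ t, evF k t ∈ S i → y t = a i (evF k t)) then (-1:ℝ) else 0) *
  Matrix.replicateRow Unit (fun z => if (∀ t, odF k t ∈ S i → z t = a i (odF k t)) then (1:ℝ) else 0)

open scoped Classical in
lemma MiF_apply (k m : ℕ) (S : Fin m → Finset (Fin (2 * k)))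
    (a : Fin m → (Fin (2 * k) → Bool)) (i : Fin m) (y z : Fin k → Bool) :
    MiF k m S a i y z = if ptF k y z ∈ cube (S i) (a i) then (-1:ℝ) else 0 := by
  rw [MiF, outer_apply]
  have hiff := mem_cube_ptF k (S i) (a i) y z
  by_cases hP : (∀ t, evF k t ∈ S i → y t = a i (evF k t))
  · by_cases hQ : (∀ t, odF k t ∈ S i → z t = a i (odF k t))
    · rw [if_pos hP, if_pos hQ, if_pos (hiff.2 ⟨hP, hQ⟩)]; norm_num
    · rw [if_pos hP, if_neg hQ, if_neg (fun hc => hQ (hiff.1 hc).2)]; norm_num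
  · rw [if_neg hP, if_neg (fun hc => hP (hiff.1 hc).1)]; norm_num

lemma MiF_rank (k m : ℕ) (S : Fin m → Finset (Fin (2 * k)))
    (a : Fin m → (Fin (2 * k) → Bool)) (i : Fin m) : (MiF k m S a i).rank ≤ 1 := by
  classical
  exact myRank_outer _ _

noncomputable def JF (k : ℕ) : Matrix (Fin k → Bool) (Fin k → Bool) ℝ :=
  Matrix.replicateCol Unit (fun _ => (1:ℝ)) * Matrix.replicateRow Unit (fun _ => (1:ℝ))

lemma JF_apply (k : ℕ) (y z : Fin k → Bool) : JF k y z = 1 := by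
  rw [JF, outer_apply]; norm_num

lemma JF_rank (k : ℕ) : (JF k).rank ≤ 1 := myRank_outer _ _

/-- The function ⋁ᵢ x_{2i} x_{2i+1} has a SOP with k cubes but every DSOP has ≥ 2^k - 1 cubes. -/
theorem stmt7 (k : ℕ) (hk : 1 ≤ k) :
    ∃ onset : Set (Fin (2 * k) → Bool),
      onset = {x | ∃ i : Fin k,
        x ⟨2 * i.1, by have := i.2; omega⟩ = true ∧ x ⟨2 * i.1 + 1, by have := i.2; omega⟩ = true} ∧
      (∃ F : Fin k → Set (Fin (2 * k) → Bool),
        (∀ i : Fin k, F i = {x | x ⟨2 * i.1, by have := i.2; omega⟩ = true ∧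
            x ⟨2 * i.1 + 1, by have := i.2; omega⟩ = true}) ∧
        (∀ i, IsSubcube (F i)) ∧ (⋃ i, F i) = onset) ∧
      (∀ (m : ℕ) (F : Fin m → Set (Fin (2 * k) → Bool)),
        (∀ i, IsSubcube (F i)) → (∀ i j, i ≠ j → Disjoint (F i) (F j)) →
        (⋃ i, F i) = onset → 2 ^ k - 1 ≤ m) := by
  classical
  refine ⟨_, rfl, ?_, ?_⟩
  · refine ⟨fun i : Fin k => {x | x ⟨2 * i.1, by have := i.2; omega⟩ = true ∧
        x ⟨2 * i.1 + 1, by have := i.2; omega⟩ = true}, fun _ => rfl, ?_, ?_⟩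
    · intro i
      refine ⟨{⟨2 * i.1, by have := i.2; omega⟩, ⟨2 * i.1 + 1, by have := i.2; omega⟩},
        fun _ => true, ?_⟩
      ext x
      simp only [Set.mem_setOf_eq, cube, Finset.mem_insert, Finset.mem_singleton]
      constructor
      · rintro ⟨hx1, hx2⟩ j (rfl | rfl) <;> assumption
      · intro h; exact ⟨h _ (Or.inl rfl), h _ (Or.inr rfl)⟩
    · ext x; simp only [Set.mem_iUnion, Set.mem_setOf_eq]
  · intro m F hsub hdisj hcov
    choose S a hFa using hsub
    -- characterize membership in the onset for paired points
    have honset : ∀ y z : Fin k → Bool,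
        (∃ i, ptF k y z ∈ F i) ↔ ∃ t : Fin k, y t = true ∧ z t = true := by
      intro y z
      rw [← Set.mem_iUnion, hcov]
      simp only [Set.mem_setOf_eq]
      constructor
      · rintro ⟨t, h1, h2⟩
        refine ⟨t, ?_, ?_⟩
        · rw [← ptF_ev k y z t]; exact h1
        · rw [← ptF_od k y z t]; exact h2
      · rintro ⟨t, h1, h2⟩
        refine ⟨t, ?_, ?_⟩
        · show ptF k y z (evF k t) = true; rw [ptF_ev]; exact h1
        · show ptF k y z (odF k t) = true; rw [ptF_od]; exact h2
    -- the key pointwise identity : D = J + ∑ Mi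
    have hsum : DmF k = JF k + ∑ i : Fin m, MiF k m S a i := by
      ext y z
      rw [Matrix.add_apply, Matrix.sum_apply, JF_apply]
      by_cases hyz : ∃ t : Fin k, y t = true ∧ z t = true
      · obtain ⟨i0, hi0⟩ := (honset y z).2 hyz
        have huniq : ∀ i, (ptF k y z ∈ F i) ↔ i = i0 := by
          intro i
          constructor
          · intro hi
            by_contra hne
            exact (Set.disjoint_left.1 (hdisj i i0 hne) hi) hi0
          · rintro rfl; exact hi0
        have hD0 : DmF k y z = 0 := by
          obtain ⟨t, ht1, ht2⟩ := hyz
          simp only [DmF, Matrix.of_apply]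
          exact Finset.prod_eq_zero (Finset.mem_univ t) (by simp [ht1, ht2])
        have hS : ∑ i : Fin m, MiF k m S a i y z = -1 := by
          have hterm : ∀ i, MiF k m S a i y z = if i = i0 then (-1:ℝ) else 0 := by
            intro i
            rw [MiF_apply, ← hFa i]
            simp only [huniq i]
          rw [Finset.sum_congr rfl (fun i _ => hterm i)]
          simp
        rw [hD0, hS]
        norm_num
      · have hD1 : DmF k y z = 1 := by
          simp only [DmF, Matrix.of_apply]
          refine Finset.prod_eq_one (fun t _ => ?_)
          have hnt : ¬(y t = true ∧ z t = true) := fun hc => hyz ⟨t, hc⟩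
          cases hyt : y t <;> cases hzt : z t <;> simp_all
        have hS0 : ∑ i : Fin m, MiF k m S a i y z = 0 := by
          refine Finset.sum_eq_zero (fun i _ => ?_)
          rw [MiF_apply, ← hFa i]
          rw [if_neg (fun hc => hyz ((honset y z).1 ⟨i, hc⟩))]
        rw [hD1, hS0]
        norm_num
    -- rank computation
    have hrank : (DmF k).rank ≤ 1 + m := by
      rw [hsum]
      refine (myRank_add_le _ _).trans (add_le_add (JF_rank k) ?_)
      refine (myRank_sum_le _ _).trans ?_
      calc ∑ i : Fin m, (MiF k m S a i).rank ≤ ∑ _i : Fin m, 1 :=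
            Finset.sum_le_sum (fun i _ => MiF_rank k m S a i)
        _ = m := by simp
    have hunit : IsUnit (DmF k) := (Matrix.isUnit_iff_isUnit_det _).2 (Matrix.isUnit_det_of_right_inverse (DmF_mul_EF k))
    have hcard : (DmF k).rank = 2 ^ k := by
      rw [Matrix.rank_of_isUnit _ hunit]
      simp [Fintype.card_fun]
    rw [hcard] at hrank
    omega
end

section
/- With the setup of the 3D-matching reduction (b injective with all b(i) of weight q/2, v^(i) and w^(A) as defined), if C and D are two distinct members of a subcollection 𝒞 ⊆ S that forms an exact cover of {1,...,n} (every element is in exactly one member of 𝒞), then no vector v^(j), j ∈ {1,...,n}, lies in D(w^(C)) ∩ D(w^(D)). In other words, the cubes τ(w^(C)) and τ(w^(D)) intersect only in points outside the set V = {v^(1),...,v^(n)}. -/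
/-- In the 3D-matching reduction setup below:
* \`π\` assigns each element of {1,…,n} to one of three equal-size blocks,
* \`b\` is an injective encoding by q-bit vectors of weight q/2,
* \`S\` collects 3-sets with exactly one element per block,
* \`v i\` puts \`b i\` in block \`π i\` of {0,1}^{3q} (zero elsewhere),
* \`w A\` is the bitwise OR of the \`v i\`, i ∈ A. -/
theorem stmt13 (n q : ℕ) (hn : 3 ∣ n) (hq : Even q)
    (π : Fin n → Fin 3)
    (hπ : ∀ blk : Fin 3, (Finset.univ.filter (fun i => π i = blk)).card = n / 3)
    (b : Fin n → Fin q → Bool) (hb : Function.Injective b)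
    (hbw : ∀ i, (Finset.univ.filter (fun t => b i t = true)).card = q / 2)
    (S : Finset (Finset (Fin n)))
    (hS : ∀ A ∈ S, ∀ blk : Fin 3, (A.filter (fun i => π i = blk)).card = 1)
    (v : Fin n → Fin 3 × Fin q → Bool)
    (hv : ∀ i p, v i p = if p.1 = π i then b i p.2 else false)
    (w : Finset (Fin n) → Fin 3 × Fin q → Bool)
    (hw : ∀ A p, w A p = true ↔ ∃ i ∈ A, v i p = true)
    (𝒞 : Finset (Finset (Fin n))) (h𝒞S : 𝒞 ⊆ S)
    (hcover : ∀ i : Fin n, ∃! A, A ∈ 𝒞 ∧ i ∈ A) :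
    ∀ C ∈ 𝒞, ∀ D ∈ 𝒞, C ≠ D → ∀ j : Fin n,
      ¬ ((∀ p, v j p ≤ w C p) ∧ (∀ p, v j p ≤ w D p)) := by
  intro C hC D hD hne j ⟨h1, h2⟩
  have key : ∀ A ∈ 𝒞, (∀ p, v j p ≤ w A p) → j ∈ A := by
    intro A hA hle
    obtain ⟨i, hi⟩ := Finset.card_eq_one.mp (hS A (h𝒞S hA) (π j))
    have hiA : i ∈ A ∧ π i = π j :=
      Finset.mem_filter.mp (hi ▸ Finset.mem_singleton_self i)
    have hsub : (Finset.univ.filter (fun t => b j t = true)) ⊆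
        (Finset.univ.filter (fun t => b i t = true)) := by
      intro t ht
      have hbjt : b j t = true := (Finset.mem_filter.mp ht).2
      have hvj : v j (π j, t) = true := by rw [hv]; simp [hbjt]
      have hwA : w A (π j, t) = true := by
        have h := hle (π j, t)
        rw [hvj] at h
        cases hw' : w A (π j, t)
        · rw [hw'] at h; exact absurd h (by decide)
        · rfl
      obtain ⟨i', hi'A, hvi'⟩ := (hw A (π j, t)).mp hwA
      rw [hv] at hvi'
      by_cases hπi' : (π j : Fin 3) = π i'
      · have hbi' : b i' t = true := by simpa [hπi'] using hvi'
        have hmem : i' ∈ ({i} : Finset (Fin n)) := by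
          rw [← hi]; exact Finset.mem_filter.mpr ⟨hi'A, hπi'.symm⟩
        have : i' = i := Finset.mem_singleton.mp hmem
        subst this
        exact Finset.mem_filter.mpr ⟨Finset.mem_univ _, hbi'⟩
      · simp [hπi'] at hvi'
    have hbeq : b i = b j := by
      have heq := Finset.eq_of_subset_of_card_le hsub (by rw [hbw, hbw])
      funext t
      have hiff : t ∈ Finset.univ.filter (fun t => b j t = true) ↔
          t ∈ Finset.univ.filter (fun t => b i t = true) := by rw [heq]
      simp only [Finset.mem_filter, Finset.mem_univ, true_and] at hiff
      cases hbj : b j t <;> cases hbi : b i t <;> simp_all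
    have hij : i = j := hb hbeq
    exact hij ▸ hiA.1
  obtain ⟨E, _, hEu⟩ := hcover j
  exact hne ((hEu C ⟨hC, key C hC h1⟩).trans (hEu D ⟨hD, key D hD h2⟩).symm)
end

section
/- With the setup of the 3D-matching reduction, if 𝒞 ⊆ S is an exact cover of {1,...,n} of size n/3, then the map sending each v^(j) to the unique C ∈ 𝒞 with j ∈ C is well-defined and v^(j) ∈ D(w^(C)) for that C; hence the family of cubes { D(w^(C)) : C ∈ 𝒞 } covers every v^(j), j ∈ {1,...,n}, exactly once. -/
/-- In the 3D-matching reduction setup below: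
* \`π\` assigns each element of {1,…,n} to one of three equal-size blocks,
* \`b\` is an injective encoding by q-bit vectors of weight q/2,
* \`S\` collects 3-sets with exactly one element per block,
* \`v i\` puts \`b i\` in block \`π i\` of {0,1}^{3q} (zero elsewhere),
* \`w A\` is the bitwise OR of the \`v i\`, i ∈ A. -/
theorem stmt14 (n q : ℕ) (hn : 3 ∣ n) (hq : Even q)
    (π : Fin n → Fin 3)
    (hπ : ∀ blk : Fin 3, (Finset.univ.filter (fun i => π i = blk)).card = n / 3)
    (b : Fin n → Fin q → Bool) (hb : Function.Injective b)
    (hbw : ∀ i, (Finset.univ.filter (fun t => b i t = true)).card = q / 2)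
    (S : Finset (Finset (Fin n)))
    (hS : ∀ A ∈ S, ∀ blk : Fin 3, (A.filter (fun i => π i = blk)).card = 1)
    (v : Fin n → Fin 3 × Fin q → Bool)
    (hv : ∀ i p, v i p = if p.1 = π i then b i p.2 else false)
    (w : Finset (Fin n) → Fin 3 × Fin q → Bool)
    (hw : ∀ A p, w A p = true ↔ ∃ i ∈ A, v i p = true)
    (𝒞 : Finset (Finset (Fin n))) (h𝒞S : 𝒞 ⊆ S)
    (hcover : ∀ i : Fin n, ∃! A, A ∈ 𝒞 ∧ i ∈ A)
    (hsize : 𝒞.card = n / 3) :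
    (∀ j : Fin n, ∀ C, (C ∈ 𝒞 ∧ j ∈ C) → ∀ p, v j p ≤ w C p) ∧
    (∀ j : Fin n, ∃! C, C ∈ 𝒞 ∧ ∀ p, v j p ≤ w C p) := by
  have key : ∀ j : Fin n, ∀ C, (C ∈ 𝒞 ∧ j ∈ C) → ∀ p, v j p ≤ w C p := by
    intro j C ⟨hC, hjC⟩ p
    cases hvj : v j p with
    | false => simp
    | true =>
      have : w C p = true := (hw C p).2 ⟨j, hjC, hvj⟩
      simp [this]
  refine ⟨key, fun j => ?_⟩
  obtain ⟨A, ⟨hA𝒞, hjA⟩, huniq⟩ := hcover j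
  refine ⟨A, ⟨hA𝒞, key j A ⟨hA𝒞, hjA⟩⟩, ?_⟩
  rintro C ⟨hC𝒞, hle⟩
  apply huniq
  refine ⟨hC𝒞, ?_⟩
  have h1 := hS C (h𝒞S hC𝒞) (π j)
  obtain ⟨i₀, hi₀⟩ := Finset.card_eq_one.mp h1
  have hi₀mem : i₀ ∈ C ∧ π i₀ = π j :=
    Finset.mem_filter.mp (hi₀ ▸ Finset.mem_singleton_self i₀)
  have hsub : (Finset.univ.filter fun t => b j t = true) ⊆
      (Finset.univ.filter fun t => b i₀ t = true) := by
    intro t ht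
    simp only [Finset.mem_filter, Finset.mem_univ, true_and] at ht ⊢
    have hvjp : v j (π j, t) = true := by rw [hv]; simpa
    have hwp : w C (π j, t) = true := by
      have := hle (π j, t)
      rw [hvjp] at this
      cases hwc : w C (π j, t)
      · rw [hwc] at this; exact absurd this (by decide)
      · rfl
    obtain ⟨i, hiC, hvi⟩ := (hw C (π j, t)).1 hwp
    rw [hv] at hvi
    by_cases hπi : (π j : Fin 3) = π i
    · have hii : i = i₀ := by
        have : i ∈ C.filter (fun i => π i = π j) :=
          Finset.mem_filter.mpr ⟨hiC, hπi.symm⟩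
        rw [hi₀] at this
        exact Finset.mem_singleton.mp this
      simp only [hπi, if_pos rfl] at hvi
      rwa [hii] at hvi
    · simp [hπi] at hvi
  have heq : (Finset.univ.filter fun t => b j t = true) =
      (Finset.univ.filter fun t => b i₀ t = true) :=
    Finset.eq_of_subset_of_card_le hsub (by rw [hbw, hbw])
  have hbeq : b j = b i₀ := by
    funext t
    have ht := Finset.ext_iff.mp heq t
    simp only [Finset.mem_filter, Finset.mem_univ, true_and] at ht
    cases h1 : b j t <;> cases h2 : b i₀ t <;> simp_all
  rw [hb hbeq]
  exact hi₀mem.1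
end

section
/- With the setup of the 3D-matching reduction, suppose φ is a family of subcubes of {0,1}^{3q} (each a product of literals) such that every point covered by some cube of φ lies in D(W) = ∪_{A∈S} D(w^(A)), and every v^(j) is covered by some cube of φ. For each cube p ∈ φ let u(p) be the coordinatewise-maximal point of p. Then for each p ∈ φ there exists A(p) ∈ S with u(p) ≤ w^(A(p)), and the collection { A(p) : p ∈ φ } is a cover of {1,...,n} (every j belongs to some A(p)). In particular if |φ| = n/3 then S contains a cover of size n/3. -/
/-- In the 3D-matching reduction setup below:
* \`π\` assigns each element of {1,…,n} to one of three equal-size blocks,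
* \`b\` is an injective encoding by q-bit vectors of weight q/2,
* \`S\` collects 3-sets with exactly one element per block,
* \`v i\` puts \`b i\` in block \`π i\` of {0,1}^{3q} (zero elsewhere),
* \`w A\` is the bitwise OR of the \`v i\`, i ∈ A. -/
theorem stmt15 (n q : ℕ) (hn : 3 ∣ n) (hq : Even q)
    (π : Fin n → Fin 3)
    (hπ : ∀ blk : Fin 3, (Finset.univ.filter (fun i => π i = blk)).card = n / 3)
    (b : Fin n → Fin q → Bool) (hb : Function.Injective b)
    (hbw : ∀ i, (Finset.univ.filter (fun t => b i t = true)).card = q / 2)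
    (S : Finset (Finset (Fin n)))
    (hS : ∀ A ∈ S, ∀ blk : Fin 3, (A.filter (fun i => π i = blk)).card = 1)
    (v : Fin n → Fin 3 × Fin q → Bool)
    (hv : ∀ i p, v i p = if p.1 = π i then b i p.2 else false)
    (w : Finset (Fin n) → Fin 3 × Fin q → Bool)
    (hw : ∀ A p, w A p = true ↔ ∃ i ∈ A, v i p = true)
    (m : ℕ) (F : Fin m → Set (Fin 3 × Fin q → Bool))
    (hcube : ∀ i, ∃ (T : Finset (Fin 3 × Fin q)) (a : Fin 3 × Fin q → Bool),
      F i = {x | ∀ p ∈ T, x p = a p})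
    (hDW : ∀ i, ∀ x ∈ F i, ∃ A ∈ S, ∀ p, x p ≤ w A p)
    (hcov : ∀ j : Fin n, ∃ i, v j ∈ F i)
    (u : Fin m → Fin 3 × Fin q → Bool)
    (hu : ∀ i, u i ∈ F i ∧ ∀ x ∈ F i, ∀ p, x p ≤ u i p) :
    (∃ Asel : Fin m → Finset (Fin n),
      (∀ i, Asel i ∈ S ∧ ∀ p, u i p ≤ w (Asel i) p) ∧
      ∀ j : Fin n, ∃ i, j ∈ Asel i) ∧
    (m = n / 3 → ∃ T : Finset (Finset (Fin n)),
      T ⊆ S ∧ T.card ≤ n / 3 ∧ ∀ j : Fin n, ∃ A ∈ T, j ∈ A) := by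
  have key : ∀ (A : Finset (Fin n)), A ∈ S → ∀ j, (∀ p, v j p ≤ w A p) → j ∈ A := by
    intro A hA j hle
    have h1 := hS A hA (π j)
    obtain ⟨i0, hi0⟩ := Finset.card_eq_one.mp h1
    have hmem : i0 ∈ A.filter (fun i => π i = π j) := by
      rw [hi0]; exact Finset.mem_singleton_self i0
    have hi0A : i0 ∈ A := (Finset.mem_filter.mp hmem).1
    have hπi0 : π i0 = π j := (Finset.mem_filter.mp hmem).2
    have huniq : ∀ i ∈ A, π i = π j → i = i0 := by
      intro i hiA hπi
      have : i ∈ A.filter (fun i => π i = π j) := Finset.mem_filter.mpr ⟨hiA, hπi⟩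
      rw [hi0] at this; exact Finset.mem_singleton.mp this
    have hsub : ∀ t, b j t = true → b i0 t = true := by
      intro t hbt
      have hvj : v j (π j, t) = true := by rw [hv]; simp [hbt]
      have hw1 : w A (π j, t) = true := by
        have h2 := hle (π j, t); rw [hvj] at h2
        cases h : w A (π j, t) with
        | false => rw [h] at h2; exact absurd h2 (by decide)
        | true => rfl
      obtain ⟨i, hiA, hvi⟩ := (hw A (π j, t)).mp hw1
      rw [hv] at hvi
      by_cases hp : π j = π i
      · have : i = i0 := huniq i hiA hp.symm
        subst this
        simpa [hp] using hvi
      · simp [hp] at hvi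
    have hseq : (Finset.univ.filter (fun t => b j t = true)) = (Finset.univ.filter (fun t => b i0 t = true)) := by
      apply Finset.eq_of_subset_of_card_le
      · intro t ht
        simp only [Finset.mem_filter, Finset.mem_univ, true_and] at ht ⊢
        exact hsub t ht
      · rw [hbw, hbw]
    have hbeq : b j = b i0 := by
      funext t
      have hiff : (b j t = true) ↔ (b i0 t = true) := by
        constructor
        · intro h
          have h3 : t ∈ Finset.univ.filter (fun t => b i0 t = true) := by
            rw [← hseq]; exact Finset.mem_filter.mpr ⟨Finset.mem_univ t, h⟩
          exact (Finset.mem_filter.mp h3).2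
        · intro h
          have h3 : t ∈ Finset.univ.filter (fun t => b j t = true) := by
            rw [hseq]; exact Finset.mem_filter.mpr ⟨Finset.mem_univ t, h⟩
          exact (Finset.mem_filter.mp h3).2
      cases hjj : b j t <;> cases hii : b i0 t <;> simp_all
    have hji0 : j = i0 := hb hbeq
    rw [hji0]; exact hi0A
  have hsel : ∀ i : Fin m, ∃ A ∈ S, ∀ p, u i p ≤ w A p := fun i => hDW i (u i) (hu i).1
  choose Asel hAselS hAsel using hsel
  have hcover : ∀ j : Fin n, ∃ i, j ∈ Asel i := by
    intro j
    obtain ⟨i, hji⟩ := hcov j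
    refine ⟨i, key _ (hAselS i) j ?_⟩
    intro p
    exact le_trans ((hu i).2 (v j) hji p) (hAsel i p)
  refine ⟨⟨Asel, fun i => ⟨hAselS i, hAsel i⟩, hcover⟩, ?_⟩
  intro hm
  refine ⟨Finset.univ.image Asel, ?_, ?_, ?_⟩
  · intro A hA
    obtain ⟨i, _, rfl⟩ := Finset.mem_image.mp hA
    exact hAselS i
  · calc (Finset.univ.image Asel).card ≤ Finset.univ.card := Finset.card_image_le
      _ = m := by simp
      _ = n / 3 := hm
  · intro j
    obtain ⟨i, hi⟩ := hcover j
    exact ⟨Asel i, Finset.mem_image_of_mem _ (Finset.mem_univ i), hi⟩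
end

section
/- Let p1 and p2 be subcubes of {0,1}^n with p1 ∩ p2 ≠ ∅ and p2 ⊄ p1, where p1 fixes k1 coordinates and p1, p2 have exactly c commonly fixed coordinates. Then the minimum number of pairwise disjoint subcubes needed to partition p2 \ p1 equals k1 - c; consequently the weight w(p1/p2) := k1 - c - 1 equals the number of extra cubes (beyond the single cube p2) needed to cover p2 \ p1 disjointly. -/
lemma mem_cube_iff {n : ℕ} (S : Finset (Fin n)) (a : Fin n → Bool) (x : Fin n → Bool) :
    x ∈ cube S a ↔ ∀ i ∈ S, x i = a i := Iff.rfl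

/-- The minimum number of pairwise disjoint subcubes partitioning p2 \ p1 equals k1 - c. -/
theorem stmt16 (n : ℕ) (S1 S2 : Finset (Fin n)) (a1 a2 : Fin n → Bool)
    (hne : (cube S1 a1 ∩ cube S2 a2).Nonempty)
    (hnsub : ¬ cube S2 a2 ⊆ cube S1 a1) :
    IsLeast {m : ℕ | ∃ F : Fin m → Set (Fin n → Bool),
        (∀ i, IsSubcube (F i)) ∧ (∀ i j, i ≠ j → Disjoint (F i) (F j)) ∧
        (⋃ i, F i) = cube S2 a2 \ cube S1 a1}
      (S1.card - (S1 ∩ S2).card) := by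
  classical
  obtain ⟨x0, hx0⟩ := hne
  have hx1 : ∀ i ∈ S1, x0 i = a1 i := hx0.1
  have hx2 : ∀ i ∈ S2, x0 i = a2 i := hx0.2
  set T : Finset (Fin n) := S1 \ S2 with hTdef
  have hcard : S1.card - (S1 ∩ S2).card = T.card := by
    rw [hTdef, ← Finset.sdiff_inter_self_left S1 S2,
      Finset.card_sdiff_of_subset Finset.inter_subset_left]
  rw [hcard]
  have hTS1 : ∀ t ∈ T, t ∈ S1 := fun t ht => (Finset.mem_sdiff.mp ht).1
  have hTS2 : ∀ t ∈ T, t ∉ S2 := fun t ht => (Finset.mem_sdiff.mp ht).2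
  -- flipping a coordinate in `T` moves `x0` into `p2 \ p1`
  have hy : ∀ t ∈ T, Function.update x0 t (!x0 t) ∈ cube S2 a2 \ cube S1 a1 := by
    intro t ht
    constructor
    · intro i hi
      rw [Function.update_of_ne (by rintro rfl; exact hTS2 _ ht hi)]
      exact hx2 i hi
    · intro hmem
      have h := hmem t (hTS1 t ht)
      rw [Function.update_self, ← hx1 t (hTS1 t ht)] at h
      simp at h
  constructor
  · -- T.card many disjoint subcubes suffice
    show ∃ F : Fin T.card → Set (Fin n → Bool), _
    set k := T.card with hk
    let e : Fin k → Fin n := fun j => (T.equivFin.symm j : Fin n)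
    have he_mem : ∀ j, e j ∈ T := fun j => (T.equivFin.symm j).2
    have he_inj : Function.Injective e := fun i j h =>
      T.equivFin.symm.injective (Subtype.ext h)
    refine ⟨fun j => cube (S2 ∪ (Finset.Iic j).image e)
      (Function.update x0 (e j) (!x0 (e j))), fun j => ⟨_, _, rfl⟩, ?_, ?_⟩
    · -- disjointness
      have key : ∀ i j : Fin k, i < j → ∀ x : Fin n → Bool,
          x ∈ cube (S2 ∪ (Finset.Iic i).image e) (Function.update x0 (e i) (!x0 (e i))) →
          x ∈ cube (S2 ∪ (Finset.Iic j).image e) (Function.update x0 (e j) (!x0 (e j))) →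
          False := by
        intro i j hij x hxi hxj
        have h1 : x (e i) = !x0 (e i) := by
          have := hxi (e i) (Finset.mem_union_right _
            (Finset.mem_image_of_mem e (Finset.mem_Iic.mpr le_rfl)))
          rwa [Function.update_self] at this
        have h2 : x (e i) = x0 (e i) := by
          have := hxj (e i) (Finset.mem_union_right _
            (Finset.mem_image_of_mem e (Finset.mem_Iic.mpr hij.le)))
          rwa [Function.update_of_ne (fun h => absurd (he_inj h) hij.ne)] at this
        rw [h1] at h2
        simp at h2
      intro i j hij
      rw [Set.disjoint_left]
      intro x hxi hxj
      rcases lt_or_gt_of_ne hij with h | h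
      · exact key i j h x hxi hxj
      · exact key j i h x hxj hxi
    · -- union equals p2 \ p1
      ext x
      simp only [Set.mem_iUnion]
      constructor
      · rintro ⟨j, hxj⟩
        constructor
        · intro i hi
          have := hxj i (Finset.mem_union_left _ hi)
          rw [Function.update_of_ne (by rintro rfl; exact hTS2 _ (he_mem j) hi)] at this
          rw [this, hx2 i hi]
        · intro hmem
          have h1 : x (e j) = !x0 (e j) := by
            have := hxj (e j) (Finset.mem_union_right _
              (Finset.mem_image_of_mem e (Finset.mem_Iic.mpr le_rfl)))
            rwa [Function.update_self] at this
          have h2 := hmem (e j) (hTS1 _ (he_mem j))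
          rw [← hx1 _ (hTS1 _ (he_mem j))] at h2
          rw [h1] at h2
          simp at h2
      · rintro ⟨hxp2, hxp1⟩
        have hex : ∃ i ∈ S1, x i ≠ a1 i := by
          by_contra h
          push_neg at h
          exact hxp1 h
        obtain ⟨i0, hi0S1, hi0⟩ := hex
        have hi0T : i0 ∈ T := by
          rw [hTdef, Finset.mem_sdiff]
          refine ⟨hi0S1, fun hi0S2 => hi0 ?_⟩
          rw [hxp2 i0 hi0S2, ← hx2 i0 hi0S2, hx1 i0 hi0S1]
        set J : Finset (Fin k) :=
          Finset.univ.filter (fun j => x (e j) ≠ a1 (e j)) with hJ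
        have hJne : J.Nonempty := by
          refine ⟨T.equivFin ⟨i0, hi0T⟩, ?_⟩
          rw [hJ, Finset.mem_filter]
          refine ⟨Finset.mem_univ _, ?_⟩
          show x (e (T.equivFin ⟨i0, hi0T⟩)) ≠ _
          simp only [e, Equiv.symm_apply_apply]
          exact hi0
        set j := J.min' hJne with hj
        have hjJ : j ∈ J := J.min'_mem hJne
        have hjx : x (e j) ≠ a1 (e j) := (Finset.mem_filter.mp hjJ).2
        refine ⟨j, ?_⟩
        intro l hl
        rcases Finset.mem_union.mp hl with hl | hl
        · rw [Function.update_of_ne (by rintro rfl; exact hTS2 _ (he_mem j) hl)]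
          rw [hxp2 l hl, hx2 l hl]
        · obtain ⟨i, hi, rfl⟩ := Finset.mem_image.mp hl
          rcases eq_or_lt_of_le (Finset.mem_Iic.mp hi) with heq | hlt
          · rw [heq, Function.update_self]
            have hx0j : x0 (e j) = a1 (e j) := hx1 _ (hTS1 _ (he_mem j))
            rw [hx0j]
            revert hjx
            cases hx' : x (e j) <;> cases ha' : a1 (e j) <;> simp_all
          · have hiJ : i ∉ J := fun hiJ => absurd (J.min'_le i hiJ) (not_le.mpr hlt)
            have : x (e i) = a1 (e i) := by
              by_contra h
              exact hiJ (Finset.mem_filter.mpr ⟨Finset.mem_univ _, h⟩)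
            rw [Function.update_of_ne (fun h => absurd (he_inj h) hlt.ne)]
            rw [this, hx1 _ (hTS1 _ (he_mem i))]
  · -- lower bound
    rintro m ⟨F, hsubcube, hdisj, huniv⟩
    -- x0 is in no F j
    have hx0notin : ∀ j, x0 ∉ F j := by
      intro j hj
      have : x0 ∈ cube S2 a2 \ cube S1 a1 := huniv ▸ Set.mem_iUnion.mpr ⟨j, hj⟩
      exact this.2 hx1
    -- some starting index (m > 0 unless T empty)
    rcases T.eq_empty_or_nonempty with hTe | ⟨t0, ht0⟩
    · simp [hTe]
    have hcov0 : ∃ j : Fin m, Function.update x0 t0 (!x0 t0) ∈ F j :=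
      Set.mem_iUnion.mp (huniv ▸ hy t0 ht0)
    obtain ⟨j0, _⟩ := hcov0
    have hcov : ∀ t : Fin n, ∃ j : Fin m,
        t ∈ T → Function.update x0 t (!x0 t) ∈ F j := by
      intro t
      by_cases ht : t ∈ T
      · obtain ⟨j, hj⟩ := Set.mem_iUnion.mp (huniv ▸ hy t ht)
        exact ⟨j, fun _ => hj⟩
      · exact ⟨j0, fun h => absurd h ht⟩
    choose g hg using hcov
    have hginj : Set.InjOn g ↑T := by
      intro t ht t' ht' hgt
      obtain ⟨S, b, hSb⟩ := hsubcube (g t)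
      have hx0nb : ∃ l ∈ S, x0 l ≠ b l := by
        by_contra h
        push_neg at h
        exact hx0notin (g t) (hSb ▸ h)
      obtain ⟨l, hlS, hl⟩ := hx0nb
      have hlt : l = t := by
        by_contra h
        have := (hSb ▸ hg t ht) l hlS
        rw [Function.update_of_ne h] at this
        exact hl this
      have hlt' : l = t' := by
        by_contra h
        have := (hSb ▸ (hgt ▸ hg t' ht')) l hlS
        rw [Function.update_of_ne h] at this
        exact hl this
      rw [← hlt, hlt']
    have := Finset.card_le_card_of_injOn g
      (fun a _ => Finset.mem_univ (g a)) hginj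
    simpa using this
end
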